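/- Let f : ℂ → ℂ be analytic at z₀ with f(z₀) ≠ 0, f′(z₀) = 0 and f″(z₀) ≠ 0 (a simple critical point). Then the desingularized Newton field V_f is real Fréchet differentiable at z₀ with derivative the real-linear (complex antilinear) map L : ℂ → ℂ, L(dz) = −(1 + |f(z₀)|⁴)⁻¹ · f(z₀) · conj(f″(z₀) · dz); moreover the determinant of L as an ℝ-linear endomorphism of ℂ equals −((1 + |f(z₀)|⁴)⁻¹ · |f(z₀)| · |f″(z₀)|)², which is strictly negative. Hence a simple critical point is a hyperbolic saddle of the desingularized Newton flow. -/

import Mathlib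

open Complex

/-- The desingularized Newton field of `f`. -/
noncomputable def desingNewton (f : ℂ → ℂ) (z : ℂ) : ℂ :=
  -(((1 + ‖f z‖ ^ 4 : ℝ) : ℂ))⁻¹ * (starRingEnd ℂ) (deriv f z) * f z

/-- The real determinant of `z ↦ a * conj z` is `-|a|²`. -/
lemma det_mul_conj (a : ℂ) (L : ℂ →ₗ[ℝ] ℂ) (h : ∀ z, L z = a * (starRingEnd ℂ) z) :
    LinearMap.det L = -(‖a‖ ^ 2) := by
  rw [← LinearMap.det_toMatrix Complex.basisOneI, Matrix.det_fin_two]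
  simp [LinearMap.toMatrix_apply, h, Complex.sq_norm, Complex.normSq_apply]
  ring

/-- At a simple critical point `z₀` of `f` (i.e. `f z₀ ≠ 0`,
`f'(z₀) = 0`, `f''(z₀) ≠ 0`), the desingularized Newton field is real Fréchet
differentiable with the complex antilinear derivative
`dz ↦ -(1+|f z₀|⁴)⁻¹ · f z₀ · conj(f''(z₀)·dz)`, whose determinant as an ℝ-linear
endomorphism of ℂ is `-((1+|f z₀|⁴)⁻¹ |f z₀| |f''(z₀)|)² < 0`: a hyperbolic saddle. -/
theorem desingNewton_simple_critical_saddle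
    (f : ℂ → ℂ) (z₀ : ℂ) (hf : AnalyticAt ℂ f z₀)
    (h0 : f z₀ ≠ 0) (h1 : deriv f z₀ = 0) (h2 : deriv (deriv f) z₀ ≠ 0) :
    ∃ L : ℂ →L[ℝ] ℂ,
      (∀ dz : ℂ, L dz = -(((1 + ‖f z₀‖ ^ 4 : ℝ) : ℂ))⁻¹ * f z₀ *
          (starRingEnd ℂ) (deriv (deriv f) z₀ * dz)) ∧
      HasFDerivAt (desingNewton f) L z₀ ∧
      LinearMap.det (L : ℂ →ₗ[ℝ] ℂ) =
        -(((1 + ‖f z₀‖ ^ 4)⁻¹ * ‖f z₀‖ *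
            ‖deriv (deriv f) z₀‖) ^ 2) ∧
      LinearMap.det (L : ℂ →ₗ[ℝ] ℂ) < 0 := by
  set r : ℝ := 1 + ‖f z₀‖ ^ 4 with hr
  have hrpos : (0:ℝ) < r := by positivity
  set a : ℂ := -((r : ℂ))⁻¹ * f z₀ * (starRingEnd ℂ) (deriv (deriv f) z₀) with ha
  set L : ℂ →L[ℝ] ℂ := a • (Complex.conjCLE.toContinuousLinearMap) with hL
  have hLapp : ∀ dz : ℂ, L dz = a * (starRingEnd ℂ) dz := fun dz => rfl
  refine ⟨L, ?_, ?_, ?_, ?_⟩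
  · intro dz
    rw [hLapp, ha, map_mul]; ring
  · -- differentiability
    have hfd : AnalyticAt ℂ (deriv f) z₀ := by
      have h := ((ContinuousLinearMap.apply ℂ ℂ (1:ℂ)).analyticAt (fderiv ℂ f z₀)).comp hf.fderiv
      have : (fun z => (fderiv ℂ f z) 1) = deriv f := by
        funext z; exact fderiv_apply_one_eq_deriv
      rw [← this]; exact h
    have hd2 : HasDerivAt (deriv f) (deriv (deriv f) z₀) z₀ :=
      hfd.differentiableAt.hasDerivAt
    have hv : HasFDerivAt (fun z => (starRingEnd ℂ) (deriv f z))
        (Complex.conjCLE.toContinuousLinearMap.comp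
          ((ContinuousLinearMap.smulRight (1 : ℂ →L[ℂ] ℂ) (deriv (deriv f) z₀)).restrictScalars ℝ)) z₀ :=
      Complex.conjCLE.toContinuousLinearMap.hasFDerivAt.comp z₀
        (hd2.hasFDerivAt.restrictScalars ℝ)
    have hfR : DifferentiableAt ℝ f z₀ := hf.differentiableAt.restrictScalars ℝ
    have hden : DifferentiableAt ℝ (fun z => (1 + ‖f z‖ ^ 4 : ℝ)) z₀ := by
      have heq : (fun z => (1 + ‖f z‖ ^ 4 : ℝ))
          = fun z => 1 + ((f z).re ^ 2 + (f z).im ^ 2) ^ 2 := by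
        funext z
        rw [show (4:ℕ) = 2*2 from rfl, pow_mul, Complex.sq_norm, Complex.normSq_apply]
        ring_nf
      rw [heq]
      have hre : DifferentiableAt ℝ (fun z => (f z).re) z₀ :=
        Complex.reCLM.differentiableAt.comp z₀ hfR
      have him : DifferentiableAt ℝ (fun z => (f z).im) z₀ :=
        Complex.imCLM.differentiableAt.comp z₀ hfR
      exact (differentiableAt_const _).add (((hre.pow 2).add (him.pow 2)).pow 2)
    have hu : DifferentiableAt ℝ (fun z => -(((1 + ‖f z‖ ^ 4 : ℝ) : ℂ))⁻¹ * f z) z₀ := by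
      have h1' : DifferentiableAt ℝ (fun z => (((1 + ‖f z‖ ^ 4 : ℝ) : ℂ))) z₀ :=
        Complex.ofRealCLM.differentiableAt.comp z₀ hden
      have hne : (((1 + ‖f z₀‖ ^ 4 : ℝ) : ℂ)) ≠ 0 := by
        simp only [ne_eq, Complex.ofReal_eq_zero]
        exact ne_of_gt hrpos
      exact ((h1'.inv hne).neg).mul hfR
    have key := hu.hasFDerivAt.mul hv
    have hzero : (starRingEnd ℂ) (deriv f z₀) = 0 := by rw [h1, map_zero]
    have heqfun : desingNewton f = fun z =>
        (-(((1 + ‖f z‖ ^ 4 : ℝ) : ℂ))⁻¹ * f z) * (starRingEnd ℂ) (deriv f z) := by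
      funext z; unfold desingNewton; ring
    rw [heqfun]
    refine key.congr_fderiv ?_
    rw [hzero, zero_smul, add_zero]
    ext dz
    simp [hLapp, ha, ContinuousLinearMap.smul_apply, hr]
    ring
  · have hdet := det_mul_conj a (L : ℂ →ₗ[ℝ] ℂ) (fun z => hLapp z)
    rw [hdet]
    have habs : ‖a‖ = r⁻¹ * ‖f z₀‖ * ‖deriv (deriv f) z₀‖ := by
      rw [ha]
      simp [norm_mul, norm_inv, Complex.norm_conj, Complex.norm_real, Real.norm_eq_abs, abs_of_pos hrpos]
    rw [habs, hr]
  · have hdet := det_mul_conj a (L : ℂ →ₗ[ℝ] ℂ) (fun z => hLapp z)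
    rw [hdet]
    have ha0 : a ≠ 0 := by
      rw [ha]
      have : ((r:ℂ))⁻¹ ≠ 0 := by
        simp only [ne_eq, inv_eq_zero, Complex.ofReal_eq_zero]
        exact ne_of_gt hrpos
      simp only [neg_mul, ne_eq, neg_eq_zero, mul_eq_zero, not_or]
      refine ⟨⟨this, h0⟩, ?_⟩
      simpa using h2
    have : 0 < ‖a‖ ^ 2 := pow_pos (norm_pos_iff.mpr ha0) 2
    linarith
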